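/- Let G be a locally finitely presented Grothendieck category admitting a densely I-stratified set S of finitely presented generators (for some downward directed preordered set I without minimum). Then the only flat object of G is the zero object. -/

import Mathlib

open CategoryTheory Limits Opposite

universe v u

namespace Paper

variable {C : Type u} [Category.{v} C]

/-- An object `X` is finitely presented if `Hom(X, -)` preserves (small) filtered
colimits. -/
def FinitelyPresented (X : C) : Prop :=
  Nonempty (PreservesFilteredColimitsOfSize.{v, v} (coyoneda.obj (op X)))

/-- An epimorphism `p : M ⟶ N` is pure if `Hom(X, p)` is surjective for every finitely
presented object `X`. -/
def IsPureEpi {M N : C} (p : M ⟶ N) : Prop :=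
  Epi p ∧ ∀ (X : C), FinitelyPresented X → ∀ g : X ⟶ N, ∃ h : X ⟶ M, h ≫ p = g

/-- An object `F` is flat if every epimorphism onto `F` is pure. -/
def IsFlatObj (F : C) : Prop :=
  ∀ (M : C) (p : M ⟶ F), Epi p → IsPureEpi p

/-- A category is locally finitely presented if it has a set of finitely presented
generators and every object is a (small filtered) direct limit of finitely presented
objects. -/
def LocallyFinitelyPresented (C : Type u) [Category.{v} C] : Prop :=
  (∃ S : Set C, (∀ X ∈ S, FinitelyPresented X) ∧ ObjectProperty.IsSeparating (fun X => X ∈ S)) ∧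
    ∀ M : C, ∃ (J : Type v) (_ : SmallCategory J) (_ : IsFiltered J) (D : J ⥤ C)
      (c : Cocone D), Nonempty (IsColimit c) ∧ Nonempty (c.pt ≅ M) ∧
        ∀ j : J, FinitelyPresented (D.obj j)

/-- A Grothendieck category: an abelian category with exact small filtered colimits
(AB5) and a generator. -/
def IsGrothendieck (C : Type u) [Category.{v} C] [Abelian C]
    [HasColimitsOfSize.{v, v} C] : Prop :=
  (∀ (J : Type v) [SmallCategory J] [IsFiltered J],
      Nonempty (PreservesFiniteLimits (colim : (J ⥤ C) ⥤ C))) ∧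
    ∃ G : C, IsSeparator G

theorem finset_lb {I : Type v} [Preorder I]
    (hdir : ∀ i j : I, ∃ k : I, k ≤ i ∧ k ≤ j) (i₀ : I) (T : Finset I) :
    ∃ j : I, j ≤ i₀ ∧ ∀ t ∈ T, j ≤ t := by
  classical
  induction T using Finset.induction_on with
  | empty => exact ⟨i₀, le_refl _, by simp⟩
  | @insert a T ha ih =>
    obtain ⟨j, hj, hjT⟩ := ih
    obtain ⟨k, hkj, hka⟩ := hdir j a
    refine ⟨k, hkj.trans hj, ?_⟩
    intro t ht
    rcases Finset.mem_insert.1 ht with rfl | ht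
    · exact hka
    · exact hkj.trans (hjT t ht)

theorem hom_sigma_zero [Abelian C] [HasColimitsOfSize.{v, v} C]
    {X : C} (hX : FinitelyPresented X) {ι : Type v} (f : ι → C)
    (hz : ∀ x : ι, ∀ φ : X ⟶ f x, φ = 0) (h : X ⟶ ∐ f) : h = 0 := by
  classical
  haveI := hX.some
  haveI : HasFiniteBiproducts C := HasFiniteBiproducts.of_hasFiniteProducts
  let D := CoproductsFromFiniteFiltered.liftToFinsetObj (Discrete.functor f)
  let cc := CoproductsFromFiniteFiltered.liftToFinsetColimitCocone (Discrete.functor f)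
  let iso : (∐ f) ≅ colimit D := colimit.isoColimitCocone cc
  suffices hz' : h ≫ iso.hom = 0 by
    have : h = (h ≫ iso.hom) ≫ iso.inv := by simp
    rw [this, hz', zero_comp]
  have hcl := isColimitOfPreserves (coyoneda.obj (op X)) (colimit.isColimit D)
  obtain ⟨T, y₀, hy⟩ := Types.jointly_surjective (D ⋙ coyoneda.obj (op X)) hcl (h ≫ iso.hom)
  let y : X ⟶ D.obj T := y₀
  have hy' : y ≫ colimit.ι D T = h ≫ iso.hom := hy
  have hy0 : y = 0 := by
    let bi := biproduct.isoCoproduct fun x : T => (Discrete.functor f).obj x.1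
    have hb : y ≫ bi.inv = 0 := by
      apply biproduct.hom_ext
      intro t
      simp only [Category.assoc, zero_comp]
      exact hz t.1.as _
    exact (cancel_mono bi.inv).1 (hb.trans zero_comp.symm)
  rw [← hy', hy0, zero_comp]

/-- Let `G` be a locally finitely presented Grothendieck category admitting a densely
`I`-stratified set `S = ⋃ᵢ Sᵢ` of finitely presented generators, where `I` is a
downward directed preordered set without minimum:
(1) each `Sᵢ` is nonempty;
(2) for each `i` and `X ∈ Sᵢ` there are only finitely many `j < i` with `Hom(X, -)`
    nonzero on `Sⱼ`;
(3) for all `j < i` and `X ∈ Sᵢ` there is an epimorphism onto `X` from a coproduct of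
    objects of `⋃_{k ≤ j} Sₖ`.
Then the only flat object of `G` is the zero object. -/
theorem stmt8 (C : Type u) [Category.{v} C] [Abelian C] [HasColimitsOfSize.{v, v} C]
    (hG : IsGrothendieck C) (hlfp : LocallyFinitelyPresented C)
    (I : Type v) [Preorder I]
    (hdir : ∀ i j : I, ∃ k : I, k ≤ i ∧ k ≤ j)
    (hnomin : ∀ i : I, ∃ j : I, j < i)
    (S : I → Set C)
    (hfp : ∀ i : I, ∀ X ∈ S i, FinitelyPresented X)
    (hsep : ObjectProperty.IsSeparating (fun X => X ∈ ⋃ i : I, S i))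
    (h1 : ∀ i : I, (S i).Nonempty)
    (h2 : ∀ (i : I), ∀ X ∈ S i,
      {j : I | j < i ∧ ∃ Y ∈ S j, ∃ f : X ⟶ Y, f ≠ 0}.Finite)
    (h3 : ∀ (i j : I), j < i → ∀ X ∈ S i,
      ∃ (ι : Type v) (f : ι → C) (e : (∐ f) ⟶ X),
        (∀ x : ι, ∃ k : I, k ≤ j ∧ f x ∈ S k) ∧ Epi e) :
    ∀ F : C, IsFlatObj F → IsZero F := by
  classical
  intro F hF
  obtain ⟨-, G0, hG0⟩ := hG
  haveI : WellPowered.{v} C := wellPowered_of_isSeparator G0 hG0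
  have key : ∀ (i : I) (X : C), X ∈ S i → ∀ g : X ⟶ F, g = 0 := by
    intro i X hX g
    have hBfin := h2 i X hX
    choose σ hσ using hnomin
    obtain ⟨j₀, hj₀⟩ : ∃ j₀, j₀ < i := ⟨σ i, hσ i⟩
    obtain ⟨j, hjj₀, hjT⟩ := finset_lb hdir j₀ (hBfin.toFinset.image σ)
    have hji : j < i := lt_of_le_of_lt hjj₀ hj₀
    -- every object of a level `≤ j` receives only the zero map from `X`
    have hdeep : ∀ k : I, k ≤ j → ∀ Y ∈ S k, ∀ φ : X ⟶ Y, φ = 0 := by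
      intro k hk Y hY φ
      by_contra hne
      have hkB : k ∈ {m : I | m < i ∧ ∃ Y ∈ S m, ∃ f : X ⟶ Y, f ≠ 0} :=
        ⟨lt_of_le_of_lt hk hji, Y, hY, φ, hne⟩
      have hle : j ≤ σ k :=
        hjT _ (Finset.mem_image_of_mem σ ((Set.Finite.mem_toFinset hBfin).2 hkB))
      exact absurd (lt_of_le_of_lt (hk.trans hle) (hσ k)) (lt_irrefl k)
    -- every object of `S` admits an epimorphism from a coproduct of objects of levels `≤ j`
    have hcover : ∀ (m : I) (G : C), G ∈ S m → ∃ (κ : Type v) (f : κ → C) (e : (∐ f) ⟶ G),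
        (∀ x, ∃ k : I, k ≤ j ∧ f x ∈ S k) ∧ Epi e := by
      intro m G hGm
      obtain ⟨l', hl'j, hl'm⟩ := hdir j m
      obtain ⟨l, hl⟩ : ∃ l, l < l' := ⟨σ l', hσ l'⟩
      have hlm : l < m := lt_of_lt_of_le hl hl'm
      obtain ⟨κ, f, e, hk, he⟩ := h3 m l hlm G hGm
      exact ⟨κ, f, e, fun x => (hk x).imp
        (fun k hkk => ⟨hkk.1.trans (hl.le.trans hl'j), hkk.2⟩), he⟩
    -- the set of image subobjects of "deep" maps into F
    let 𝒰 : Set (Subobject F) :=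
      {U | ∃ (Y : C) (ψ : Y ⟶ F), (∃ k : I, k ≤ j ∧ Y ∈ S k) ∧ imageSubobject ψ = U}
    haveI : Small.{v} (Subobject F) := WellPowered.subobject_small F
    have hrep : ∀ u : Shrink.{v} ↥𝒰, ∃ (Y : C) (ψ : Y ⟶ F),
        (∃ k : I, k ≤ j ∧ Y ∈ S k) ∧
          imageSubobject ψ = (((equivShrink ↥𝒰).symm u : ↥𝒰) : Subobject F) :=
      fun u => ((equivShrink ↥𝒰).symm u).2
    choose Yf ψf hdeepY himg using hrep
    let p : (∐ Yf) ⟶ F := Sigma.desc ψf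
    -- every deep map into F equalizes any pair equalized by p
    have hdeepeq : ∀ {Z : C} (u v : F ⟶ Z), p ≫ u = p ≫ v →
        ∀ (Y : C) (ψ : Y ⟶ F), (∃ k : I, k ≤ j ∧ Y ∈ S k) → ψ ≫ u = ψ ≫ v := by
      intro Z u v huv Y ψ hdψ
      have hUmem : imageSubobject ψ ∈ 𝒰 := ⟨Y, ψ, hdψ, rfl⟩
      set u0 : Shrink.{v} ↥𝒰 := equivShrink ↥𝒰 ⟨_, hUmem⟩ with hu0
      have himg' : imageSubobject (ψf u0) = imageSubobject ψ := by
        rw [himg u0, hu0, Equiv.symm_apply_apply]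
      have e1 : ψf u0 ≫ u = ψf u0 ≫ v := by
        have hfac : Sigma.ι Yf u0 ≫ p = ψf u0 := Sigma.ι_desc _ _
        rw [← hfac, Category.assoc, Category.assoc, huv]
      have e2 : (imageSubobject (ψf u0)).arrow ≫ u = (imageSubobject (ψf u0)).arrow ≫ v := by
        rw [← cancel_epi (factorThruImageSubobject (ψf u0)), ← Category.assoc, ← Category.assoc,
          imageSubobject_arrow_comp]
        exact e1
      have e3 : (imageSubobject ψ).arrow ≫ u = (imageSubobject ψ).arrow ≫ v := by
        have hle : imageSubobject ψ ≤ imageSubobject (ψf u0) := le_of_eq himg'.symm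
        rw [← Subobject.ofLE_arrow hle, Category.assoc, Category.assoc, e2]
      rw [← imageSubobject_arrow_comp ψ, Category.assoc, Category.assoc, e3]
    have hepi : Epi p := by
      refine ⟨fun {Z} u v huv => ?_⟩
      refine hsep u v ?_
      intro G hGmem h
      obtain ⟨m, hm⟩ := Set.mem_iUnion.1 hGmem
      obtain ⟨κ, f, e, hkdeep, he⟩ := hcover m G hm
      rw [← cancel_epi e]
      apply Sigma.hom_ext
      intro x
      have := hdeepeq u v huv (f x) (Sigma.ι f x ≫ e ≫ h) (hkdeep x)
      simpa [Category.assoc] using this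
    obtain ⟨h, hh⟩ := (hF _ p hepi).2 X (hfp i X hX) g
    have hz : h = 0 := by
      refine hom_sigma_zero (hfp i X hX) Yf ?_ h
      intro x φ
      obtain ⟨k, hk, hYk⟩ := hdeepY x
      exact hdeep k hk _ hYk φ
    rw [← hh, hz, zero_comp]
  rw [IsZero.iff_id_eq_zero]
  refine hsep (𝟙 F) 0 ?_
  intro G hGmem h
  obtain ⟨m, hm⟩ := Set.mem_iUnion.1 hGmem
  rw [Category.comp_id, comp_zero]
  exact key m G hm h

end Paper
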